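/- For all integers k, l ≥ 1 and all spherical harmonics H_k ∈ ℋ_k, H_l ∈ ℋ_l, the superpolynomial Δ(H_k · H_l) lies in the real linear span of products P·Q with P ∈ ℋ_{k−1} and Q ∈ ℋ_{l−1}. -/

import Mathlib

set_option synthInstance.maxHeartbeats 1000000
set_option maxHeartbeats 1000000

open scoped TensorProduct

noncomputable section

namespace Super

/-- The algebra of ordinary polynomials in `m` commuting variables. -/
abbrev Poly (m : ℕ) := MvPolynomial (Fin m) ℝ

/-- The Grassmann algebra on `2n` anticommuting generators. -/
abbrev Grass (n : ℕ) := ExteriorAlgebra ℝ (Fin (2 * n) → ℝ)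

/-- The algebra `𝒫` of superpolynomials. -/
abbrev P (m n : ℕ) := Poly m ⊗[ℝ] Grass n

variable (m n : ℕ)

/-- The anticommuting generator `x̀_j` (0-indexed). -/
def gg (j : Fin (2 * n)) : Grass n := ExteriorAlgebra.ι ℝ (Pi.single j 1)

/-- The odd derivation `∂_{x̀_j}` on the Grassmann algebra: contraction with the
`j`-th dual basis vector. -/
def gd (j : Fin (2 * n)) : Module.End ℝ (Grass n) :=
  CliffordAlgebra.contractLeft (LinearMap.proj j)

def idx0 (j : Fin n) : Fin (2 * n) := ⟨2 * j.val, by have := j.isLt; omega⟩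
def idx1 (j : Fin n) : Fin (2 * n) := ⟨2 * j.val + 1, by have := j.isLt; omega⟩

/-- `∂_{x_i}` acting on superpolynomials. -/
def dx (i : Fin m) : Module.End ℝ (P m n) :=
  TensorProduct.map (MvPolynomial.pderiv i).toLinearMap LinearMap.id

/-- `∂_{x̀_j}` acting on superpolynomials. -/
def dg (j : Fin (2 * n)) : Module.End ℝ (P m n) :=
  TensorProduct.map LinearMap.id (gd n j)

/-- multiplication by `x_i`. -/
def mulX (i : Fin m) : Module.End ℝ (P m n) :=
  LinearMap.mulLeft ℝ ((MvPolynomial.X i : Poly m) ⊗ₜ (1 : Grass n))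

/-- multiplication by `x̀_j`. -/
def mulG (j : Fin (2 * n)) : Module.End ℝ (P m n) :=
  LinearMap.mulLeft ℝ ((1 : Poly m) ⊗ₜ gg n j)

/-- The super-Laplace operator
`Δ = 4 ∑_{j=1}^n ∂_{x̀_{2j-1}} ∂_{x̀_{2j}} - ∑_{i=1}^m ∂_{x_i}²` (written 0-indexed). -/
def Delta : Module.End ℝ (P m n) :=
  4 • (∑ j : Fin n, dg m n (idx0 n j) ∘ₗ dg m n (idx1 n j)) -
    ∑ i : Fin m, dx m n i ∘ₗ dx m n i

/-- The super-Euler operator `𝔼 = ∑ x_i ∂_{x_i} + ∑ x̀_j ∂_{x̀_j}`. -/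
def Euler : Module.End ℝ (P m n) :=
  ∑ i : Fin m, mulX m n i ∘ₗ dx m n i + ∑ j : Fin (2 * n), mulG m n j ∘ₗ dg m n j

/-- The even element `x² = ∑_{j=1}^n x̀_{2j-1} x̀_{2j} - ∑_{i=1}^m x_i²`. -/
def xsq : P m n :=
  (1 : Poly m) ⊗ₜ (∑ j : Fin n, gg n (idx0 n j) * gg n (idx1 n j)) -
    ∑ i : Fin m, (MvPolynomial.X i * MvPolynomial.X i : Poly m) ⊗ₜ (1 : Grass n)

/-- The superdimension `M = m - 2n`. -/
def Mdim : ℤ := (m : ℤ) - 2 * n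

/-- Evaluation at the origin: the constant term of a superpolynomial. -/
def eval0 : P m n →ₗ[ℝ] ℝ :=
  (TensorProduct.lid ℝ ℝ).toLinearMap ∘ₗ
    TensorProduct.map (MvPolynomial.aeval (fun _ : Fin m => (0 : ℝ))).toLinearMap
      (ExteriorAlgebra.algebraMapInv).toLinearMap

/-- `𝒫_k`, the space of homogeneous superpolynomials of degree `k`
(the eigenspace of `𝔼` with eigenvalue `k`). -/
def Pk (k : ℕ) : Submodule ℝ (P m n) :=
  LinearMap.ker (Euler m n - (k : ℝ) • LinearMap.id)

/-- `ℋ_k`, the space of spherical harmonics of degree `k`. -/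
def Hk (k : ℕ) : Submodule ℝ (P m n) :=
  Pk m n k ⊓ LinearMap.ker (Delta m n)

/-- The integral over the supersphere (Pizzetti formula with `m` replaced by `M`).
Terms where `k + M/2` is a pole of `Γ` vanish automatically since `Real.Gamma`
is zero at nonpositive integers. -/
def SS (R : P m n) : ℝ :=
  ∑' k : ℕ, (-1 : ℝ) ^ k * (2 * Real.pi ^ ((Mdim m n : ℝ) / 2)) /
      (4 ^ k * k.factorial * Real.Gamma ((k : ℝ) + (Mdim m n : ℝ) / 2)) *
    eval0 m n ((Delta m n ^ k) R)

/-- The integral over the superball. -/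
def SB (R : P m n) : ℝ :=
  ∑' k : ℕ, (-1 : ℝ) ^ k * Real.pi ^ ((Mdim m n : ℝ) / 2) /
      (4 ^ k * k.factorial * Real.Gamma ((k : ℝ) + (Mdim m n : ℝ) / 2 + 1)) *
    eval0 m n ((Delta m n ^ k) R)

/-- The super Laplace–Beltrami operator `Δ_LB = x²Δ - 𝔼(M - 2 + 𝔼)`. -/
def DeltaLB : Module.End ℝ (P m n) :=
  LinearMap.mulLeft ℝ (xsq m n) ∘ₗ Delta m n -
    Euler m n ∘ₗ (((Mdim m n : ℝ) - 2) • LinearMap.id + Euler m n)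



section Aux

variable {m n : ℕ}

open CliffordAlgebra

/-! ### Grassmann-algebra level lemmas -/

lemma contract_mul (d : Module.Dual ℝ (Fin (2*n) → ℝ)) (a b : Grass n) :
    contractLeft d (a * b)
      = contractLeft d a * b + involute a * contractLeft d b := by
  induction a using CliffordAlgebra.induction generalizing b with
  | algebraMap r =>
      simp [contractLeft_algebraMap_mul, contractLeft_algebraMap, Algebra.smul_def]
  | ι v =>
      simp [contractLeft_ι_mul, contractLeft_ι, involute_ι, Algebra.smul_def, sub_eq_add_neg]
  | mul a₁ a₂ h₁ h₂ =>
      rw [mul_assoc, h₁ (a₂ * b), h₂ b, h₁ a₂, map_mul]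
      noncomm_ring
  | add a₁ a₂ h₁ h₂ =>
      simp only [add_mul, map_add, h₁ b, h₂ b]
      abel

lemma involute_contract (d : Module.Dual ℝ (Fin (2*n) → ℝ)) (x : Grass n) :
    involute (contractLeft d x) = - contractLeft d (involute x) := by
  induction x using CliffordAlgebra.left_induction with
  | algebraMap r => simp [contractLeft_algebraMap]
  | add x y hx hy => simp only [map_add, hx, hy]; abel
  | ι_mul x v hx =>
      rw [contractLeft_ι_mul, map_sub, map_smul, map_mul, involute_ι, hx, map_mul,
        involute_ι]
      simp only [mul_neg, neg_mul, neg_neg, map_neg, contractLeft_ι_mul]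

lemma contract_swap (d d' : Module.Dual ℝ (Fin (2*n) → ℝ)) (x : Grass n) :
    contractLeft d (contractLeft d' x) = - contractLeft d' (contractLeft d x) :=
  contractLeft_comm _ _ x

/-! ### The parity (grade) involution on `P m n` -/

/-- The parity involution `σ` on superpolynomials. -/
def sgA (m n : ℕ) : P m n →ₐ[ℝ] P m n :=
  Algebra.TensorProduct.map (AlgHom.id ℝ (Poly m)) CliffordAlgebra.involute

def sg (m n : ℕ) : Module.End ℝ (P m n) := (sgA m n).toLinearMap

@[simp] lemma sg_tmul (p : Poly m) (w : Grass n) :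
    sg m n (p ⊗ₜ w) = p ⊗ₜ involute w := rfl

lemma sg_mul (a b : P m n) : sg m n (a * b) = sg m n a * sg m n b :=
  map_mul (sgA m n) a b

lemma sg_sg (a : P m n) : sg m n (sg m n a) = a := by
  induction a using TensorProduct.induction_on with
  | zero => simp
  | tmul p w => simp [involute_involute]
  | add x y hx hy => simp [map_add, hx, hy]

@[simp] lemma dg_tmul (j : Fin (2*n)) (p : Poly m) (w : Grass n) :
    dg m n j (p ⊗ₜ w) = p ⊗ₜ gd n j w := rfl

@[simp] lemma dx_tmul (i : Fin m) (p : Poly m) (w : Grass n) :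
    dx m n i (p ⊗ₜ w) = MvPolynomial.pderiv i p ⊗ₜ w := rfl

lemma dg_sg (j : Fin (2*n)) (a : P m n) :
    dg m n j (sg m n a) = - sg m n (dg m n j a) := by
  induction a using TensorProduct.induction_on with
  | zero => simp
  | tmul p w =>
      simp only [sg_tmul, dg_tmul, gd, involute_contract, TensorProduct.tmul_neg, neg_neg]
  | add x y hx hy => simp only [map_add, hx, hy]; abel

lemma dx_sg (i : Fin m) (a : P m n) :
    dx m n i (sg m n a) = sg m n (dx m n i a) := by
  induction a using TensorProduct.induction_on with
  | zero => simp
  | tmul p w => simp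
  | add x y hx hy => simp [map_add, hx, hy]

/-! ### Product rules -/

lemma dx_mul (i : Fin m) (a b : P m n) :
    dx m n i (a * b) = dx m n i a * b + a * dx m n i b := by
  induction a using TensorProduct.induction_on generalizing b with
  | zero => simp
  | tmul p w =>
      induction b using TensorProduct.induction_on with
      | zero => simp
      | tmul q u =>
          simp only [Algebra.TensorProduct.tmul_mul_tmul, dx_tmul,
            MvPolynomial.pderiv_mul, TensorProduct.add_tmul]
      | add x y hx hy =>
          simp only [mul_add, map_add, hx, hy]
          abel
  | add x y hx hy =>
      simp only [add_mul, map_add, hx b, hy b]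
      abel

lemma dg_mul (j : Fin (2*n)) (a b : P m n) :
    dg m n j (a * b) = dg m n j a * b + sg m n a * dg m n j b := by
  induction a using TensorProduct.induction_on generalizing b with
  | zero => simp
  | tmul p w =>
      induction b using TensorProduct.induction_on with
      | zero => simp
      | tmul q u =>
          simp [Algebra.TensorProduct.tmul_mul_tmul, gd, contract_mul,
            TensorProduct.tmul_add]
      | add x y hx hy =>
          simp only [mul_add, map_add, hx, hy]
          abel
  | add x y hx hy =>
      simp only [add_mul, map_add, hx b, hy b, map_add]
      abel

/-! ### Values on generators -/

lemma dx_X (i i' : Fin m) :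
    dx m n i ((MvPolynomial.X i' : Poly m) ⊗ₜ (1 : Grass n))
      = if i' = i then (1 : P m n) else 0 := by
  classical
  simp only [dx_tmul, MvPolynomial.pderiv_X]
  rcases eq_or_ne i' i with h | h
  · subst h; simp [Algebra.TensorProduct.one_def]
  · simp [Pi.single_eq_of_ne' h, h]

lemma dg_gg (j j' : Fin (2*n)) :
    dg m n j ((1 : Poly m) ⊗ₜ gg n j')
      = if j' = j then (1 : P m n) else 0 := by
  classical
  simp only [dg_tmul, gd, gg, contractLeft_ι]
  rcases eq_or_ne j' j with h | h
  · subst h; simp [Algebra.TensorProduct.one_def]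
  · simp [Pi.single_eq_of_ne (Ne.symm h), h]

lemma sg_gg (j : Fin (2*n)) :
    sg m n ((1 : Poly m) ⊗ₜ gg n j) = -((1 : Poly m) ⊗ₜ gg n j) := by
  simp [gg, involute_ι, TensorProduct.tmul_neg]

lemma sg_X (i : Fin m) :
    sg m n ((MvPolynomial.X i : Poly m) ⊗ₜ (1 : Grass n))
      = (MvPolynomial.X i : Poly m) ⊗ₜ (1 : Grass n) := by simp

/-! ### Commutation relations -/

lemma dx_dx_comm (i i' : Fin m) (a : P m n) :
    dx m n i (dx m n i' a) = dx m n i' (dx m n i a) := by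
  induction a using TensorProduct.induction_on with
  | zero => simp
  | tmul p w =>
      simp only [dx_tmul]
      congr 1
      induction p using MvPolynomial.induction_on' with
      | monomial s c =>
          classical
          rcases eq_or_ne i i' with h | h
          · subst h; rfl
          · simp only [MvPolynomial.pderiv_monomial, Finsupp.tsub_apply,
              Finsupp.single_apply]
            rw [if_neg h, if_neg (Ne.symm h), tsub_zero, tsub_zero]
            have e3 : s - Finsupp.single i' 1 - Finsupp.single i 1
                = s - Finsupp.single i 1 - Finsupp.single i' 1 := by
              ext a
              simp only [Finsupp.tsub_apply, Finsupp.single_apply]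
              split_ifs <;> omega
            rw [e3]
            congr 1
            ring
      | add p q hp hq => simp [map_add, hp, hq]
  | add x y hx hy => simp [map_add, hx, hy]

lemma dx_dg_comm (i : Fin m) (j : Fin (2*n)) (a : P m n) :
    dx m n i (dg m n j a) = dg m n j (dx m n i a) := by
  induction a using TensorProduct.induction_on with
  | zero => simp
  | tmul p w => simp
  | add x y hx hy => simp [map_add, hx, hy]

lemma dg_dg_anticomm (j j' : Fin (2*n)) (a : P m n) :
    dg m n j (dg m n j' a) = - dg m n j' (dg m n j a) := by
  induction a using TensorProduct.induction_on with
  | zero => simp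
  | tmul p w =>
      rw [dg_tmul, dg_tmul, dg_tmul, dg_tmul]
      show (p ⊗ₜ contractLeft (R := ℝ) (LinearMap.proj j)
        (contractLeft (LinearMap.proj j') w) : P m n) = _
      rw [contract_swap, TensorProduct.tmul_neg]
      rfl
  | add x y hx hy => simp only [map_add, hx, hy]; abel

/-! ### Relations with multiplication operators -/

lemma mulX_apply (i : Fin m) (a : P m n) :
    mulX m n i a = (MvPolynomial.X i : Poly m) ⊗ₜ (1 : Grass n) * a := rfl

lemma mulG_apply (j : Fin (2*n)) (a : P m n) :
    mulG m n j a = (1 : Poly m) ⊗ₜ gg n j * a := rfl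

lemma dx_mulX (i i' : Fin m) (a : P m n) :
    dx m n i (mulX m n i' a)
      = (if i' = i then a else 0) + mulX m n i' (dx m n i a) := by
  rw [mulX_apply, dx_mul, dx_X, mulX_apply]
  rcases eq_or_ne i' i with h | h
  · rw [if_pos h, if_pos h, one_mul]
  · rw [if_neg h, if_neg h, zero_mul, zero_add]

lemma dg_mulG (j j' : Fin (2*n)) (a : P m n) :
    dg m n j (mulG m n j' a)
      = (if j' = j then a else 0) - mulG m n j' (dg m n j a) := by
  rw [mulG_apply, dg_mul, dg_gg, sg_gg, mulG_apply]
  rcases eq_or_ne j' j with h | h <;>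
    simp [h, sub_eq_add_neg] <;>
    (abel_nf; rw [smul_mul_assoc])

lemma dx_mulG (i : Fin m) (j : Fin (2*n)) (a : P m n) :
    dx m n i (mulG m n j a) = mulG m n j (dx m n i a) := by
  rw [mulG_apply, dx_mul, mulG_apply]
  simp [MvPolynomial.pderiv_one]

lemma dg_mulX (j : Fin (2*n)) (i : Fin m) (a : P m n) :
    dg m n j (mulX m n i a) = mulX m n i (dg m n j a) := by
  rw [mulX_apply, dg_mul, sg_X, mulX_apply]
  simp [gd, contractLeft_one]

lemma sg_mulX (i : Fin m) (a : P m n) :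
    mulX m n i (sg m n a) = sg m n (mulX m n i a) := by
  rw [mulX_apply, mulX_apply, sg_mul, sg_X]

lemma sg_mulG (j : Fin (2*n)) (a : P m n) :
    mulG m n j (sg m n a) = - sg m n (mulG m n j a) := by
  rw [mulG_apply, mulG_apply, sg_mul, sg_gg]
  abel_nf
  rw [smul_mul_assoc, smul_smul]
  norm_num

/-! ### Commutation with Euler and Delta -/

lemma Euler_apply (a : P m n) :
    Euler m n a = ∑ i : Fin m, mulX m n i (dx m n i a)
      + ∑ j : Fin (2*n), mulG m n j (dg m n j a) := by
  simp [Euler, LinearMap.sum_apply, LinearMap.comp_apply]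

lemma Delta_apply (a : P m n) :
    Delta m n a = 4 • ∑ j : Fin n, dg m n (idx0 n j) (dg m n (idx1 n j) a)
      - ∑ i : Fin m, dx m n i (dx m n i a) := by
  simp [Delta, LinearMap.sub_apply, LinearMap.smul_apply, LinearMap.sum_apply,
    LinearMap.comp_apply]
  rw [Finset.mul_sum]

lemma dx_Euler (i : Fin m) (a : P m n) :
    Euler m n (dx m n i a) = dx m n i (Euler m n a) - dx m n i a := by
  classical
  rw [Euler_apply a, Euler_apply (dx m n i a), map_add,
    map_sum (dx m n i) (fun i' => mulX m n i' (dx m n i' a)) Finset.univ,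
    map_sum (dx m n i) (fun j => mulG m n j (dg m n j a)) Finset.univ]
  simp only [dx_mulX, dx_mulG, dx_dg_comm]
  rw [Finset.sum_add_distrib, Finset.sum_ite_eq' Finset.univ i (fun i' => dx m n i' a)]
  simp only [Finset.mem_univ, if_true]
  have h2 : ∀ i' : Fin m, dx m n i' (dx m n i a) = dx m n i (dx m n i' a) :=
    fun i' => dx_dx_comm i' i a
  simp only [h2]
  abel

lemma dg_Euler (j : Fin (2*n)) (a : P m n) :
    Euler m n (dg m n j a) = dg m n j (Euler m n a) - dg m n j a := by
  classical
  rw [Euler_apply a, Euler_apply (dg m n j a), map_add,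
    map_sum (dg m n j) (fun i => mulX m n i (dx m n i a)) Finset.univ,
    map_sum (dg m n j) (fun j' => mulG m n j' (dg m n j' a)) Finset.univ]
  simp only [dg_mulX, dg_mulG, dx_dg_comm]
  have hA : ∀ j' : Fin (2*n), dg m n j (dg m n j' a) = - dg m n j' (dg m n j a) :=
    fun j' => dg_dg_anticomm j j' a
  simp only [hA, map_neg, sub_neg_eq_add]
  rw [Finset.sum_add_distrib, Finset.sum_ite_eq' Finset.univ j (fun j' => dg m n j' a)]
  simp only [Finset.mem_univ, if_true]
  abel

lemma dx_Delta (i : Fin m) (a : P m n) :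
    Delta m n (dx m n i a) = dx m n i (Delta m n a) := by
  rw [Delta_apply a, Delta_apply (dx m n i a), map_sub, map_nsmul,
    map_sum (dx m n i) (fun j => dg m n (idx0 n j) (dg m n (idx1 n j) a)) Finset.univ,
    map_sum (dx m n i) (fun i' => dx m n i' (dx m n i' a)) Finset.univ]
  simp only [dx_dg_comm]
  have h2 : ∀ i' : Fin m, dx m n i (dx m n i' (dx m n i' a))
      = dx m n i' (dx m n i' (dx m n i a)) := fun i' => by
    rw [dx_dx_comm i i' (dx m n i' a), dx_dx_comm i i' a]
  simp only [h2]

lemma dg_Delta (j : Fin (2*n)) (a : P m n) :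
    Delta m n (dg m n j a) = dg m n j (Delta m n a) := by
  rw [Delta_apply a, Delta_apply (dg m n j a), map_sub, map_nsmul,
    map_sum (dg m n j) (fun j' => dg m n (idx0 n j') (dg m n (idx1 n j') a)) Finset.univ,
    map_sum (dg m n j) (fun i => dx m n i (dx m n i a)) Finset.univ]
  have h1 : ∀ j' : Fin n, dg m n j (dg m n (idx0 n j') (dg m n (idx1 n j') a))
      = dg m n (idx0 n j') (dg m n (idx1 n j') (dg m n j a)) := fun j' => by
    rw [dg_dg_anticomm j (idx0 n j') (dg m n (idx1 n j') a),
      dg_dg_anticomm j (idx1 n j') a, map_neg, neg_neg]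
  have h2 : ∀ i : Fin m, dg m n j (dx m n i (dx m n i a))
      = dx m n i (dx m n i (dg m n j a)) := fun i => by
    rw [← dx_dg_comm i j (dx m n i a), ← dx_dg_comm i j a]
  simp only [h1, h2]

lemma sg_Euler (a : P m n) : Euler m n (sg m n a) = sg m n (Euler m n a) := by
  rw [Euler_apply a, Euler_apply (sg m n a), map_add,
    map_sum (sg m n) (fun i => mulX m n i (dx m n i a)) Finset.univ,
    map_sum (sg m n) (fun j => mulG m n j (dg m n j a)) Finset.univ]
  simp only [dx_sg, dg_sg, sg_mulX, map_neg, sg_mulG, neg_neg]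

lemma sg_Delta (a : P m n) : Delta m n (sg m n a) = sg m n (Delta m n a) := by
  rw [Delta_apply a, Delta_apply (sg m n a), map_sub, map_nsmul,
    map_sum (sg m n) (fun j => dg m n (idx0 n j) (dg m n (idx1 n j) a)) Finset.univ,
    map_sum (sg m n) (fun i => dx m n i (dx m n i a)) Finset.univ]
  simp only [dg_sg, map_neg, neg_neg, dx_sg]

/-! ### Membership lemmas -/

lemma mem_Pk_iff {k : ℕ} {a : P m n} :
    a ∈ Pk m n k ↔ Euler m n a = (k : ℝ) • a := by
  simp [Pk, LinearMap.mem_ker, sub_eq_zero, LinearMap.sub_apply]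

lemma mem_Hk_iff {k : ℕ} {a : P m n} :
    a ∈ Hk m n k ↔ Euler m n a = (k : ℝ) • a ∧ Delta m n a = 0 := by
  simp [Hk, mem_Pk_iff, LinearMap.mem_ker]

lemma sg_mem_Hk {k : ℕ} {a : P m n} (ha : a ∈ Hk m n k) : sg m n a ∈ Hk m n k := by
  rw [mem_Hk_iff] at ha ⊢
  refine ⟨?_, ?_⟩
  · rw [sg_Euler, ha.1, map_smul]
  · rw [sg_Delta, ha.2, map_zero]

lemma dx_mem_Hk {k : ℕ} (hk : 1 ≤ k) {a : P m n} (ha : a ∈ Hk m n k) (i : Fin m) :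
    dx m n i a ∈ Hk m n (k - 1) := by
  rw [mem_Hk_iff] at ha ⊢
  have hc : ((k - 1 : ℕ) : ℝ) = (k : ℝ) - 1 := by
    rw [Nat.cast_sub hk, Nat.cast_one]
  refine ⟨?_, ?_⟩
  · rw [dx_Euler, ha.1, map_smul, hc]
    module
  · rw [dx_Delta, ha.2, map_zero]

lemma dg_mem_Hk {k : ℕ} (hk : 1 ≤ k) {a : P m n} (ha : a ∈ Hk m n k) (j : Fin (2*n)) :
    dg m n j a ∈ Hk m n (k - 1) := by
  rw [mem_Hk_iff] at ha ⊢
  have hc : ((k - 1 : ℕ) : ℝ) = (k : ℝ) - 1 := by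
    rw [Nat.cast_sub hk, Nat.cast_one]
  refine ⟨?_, ?_⟩
  · rw [dg_Euler, ha.1, map_smul, hc]
    module
  · rw [dg_Delta, ha.2, map_zero]

/-! ### The key product formula -/

lemma dg_dg_mul (a b : Fin (2*n)) (f g : P m n) :
    dg m n a (dg m n b (f * g))
      = dg m n a (dg m n b f) * g - dg m n b (sg m n f) * dg m n a g
        - sg m n (dg m n a f) * dg m n b g + f * dg m n a (dg m n b g) := by
  rw [dg_mul b f g, map_add, dg_mul a (dg m n b f) g, dg_mul a (sg m n f) (dg m n b g)]
  rw [dg_sg a f, sg_sg]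
  have h1 : sg m n (dg m n b f) = - dg m n b (sg m n f) := by rw [dg_sg, neg_neg]
  rw [h1]
  noncomm_ring
  simp only [smul_mul_assoc]
  abel

lemma dx_dx_mul (i : Fin m) (f g : P m n) :
    dx m n i (dx m n i (f * g))
      = dx m n i (dx m n i f) * g + 2 • (dx m n i f * dx m n i g)
        + f * dx m n i (dx m n i g) := by
  rw [dx_mul, map_add, dx_mul, dx_mul, two_smul]
  abel

lemma Delta_mul (f g : P m n) (hf : Delta m n f = 0) (hg : Delta m n g = 0) :
    Delta m n (f * g)
      = - (4 • ∑ j : Fin n, dg m n (idx1 n j) (sg m n f) * dg m n (idx0 n j) g)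
        - (4 • ∑ j : Fin n, sg m n (dg m n (idx0 n j) f) * dg m n (idx1 n j) g)
        - 2 • ∑ i : Fin m, dx m n i f * dx m n i g := by
  have ef : (4 • ∑ j : Fin n, dg m n (idx0 n j) (dg m n (idx1 n j) f) : P m n)
      = ∑ i : Fin m, dx m n i (dx m n i f) := by
    have := Delta_apply (m := m) (n := n) f
    rw [hf, eq_comm, sub_eq_zero] at this
    exact this
  have eg : (4 • ∑ j : Fin n, dg m n (idx0 n j) (dg m n (idx1 n j) g) : P m n)
      = ∑ i : Fin m, dx m n i (dx m n i g) := by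
    have := Delta_apply (m := m) (n := n) g
    rw [hg, eq_comm, sub_eq_zero] at this
    exact this
  have hf2 : (∑ i : Fin m, dx m n i (dx m n i f) * g)
      = 4 • ∑ j : Fin n, dg m n (idx0 n j) (dg m n (idx1 n j) f) * g := by
    rw [← Finset.sum_mul, ← Finset.sum_mul, ← ef, smul_mul_assoc]
  have hg2 : (∑ i : Fin m, f * dx m n i (dx m n i g))
      = 4 • ∑ j : Fin n, f * dg m n (idx0 n j) (dg m n (idx1 n j) g) := by
    rw [← Finset.mul_sum, ← Finset.mul_sum, ← eg, mul_smul_comm]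
  rw [Delta_apply]
  simp only [dg_dg_mul, dx_dx_mul]
  simp only [Finset.sum_add_distrib, Finset.sum_sub_distrib, smul_add, smul_sub]
  rw [hf2, hg2, ← Finset.smul_sum (r := (2:ℕ))]
  abel

lemma span_prod_mem {k l : ℕ} (u v : P m n) (hu : u ∈ Hk m n k) (hv : v ∈ Hk m n l) :
    u * v ∈ Submodule.span ℝ {p : P m n | ∃ u' ∈ Hk m n k, ∃ v' ∈ Hk m n l, p = u' * v'} :=
  Submodule.subset_span ⟨u, hu, v, hv, rfl⟩

end Aux


end Super
/-- For `k, l ≥ 1` and spherical harmonics `H_k ∈ ℋ_k`, `H_l ∈ ℋ_l`,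
the superpolynomial `Δ(H_k·H_l)` lies in the span of products `P·Q` with
`P ∈ ℋ_{k-1}` and `Q ∈ ℋ_{l-1}`. -/
theorem laplace_of_product_of_harmonics (m n : ℕ) (k l : ℕ) (hk : 1 ≤ k) (hl : 1 ≤ l)
    (Hk : Super.P m n) (hHk : Hk ∈ Super.Hk m n k)
    (Hl : Super.P m n) (hHl : Hl ∈ Super.Hk m n l) :
    Super.Delta m n (Hk * Hl) ∈
      Submodule.span ℝ {p : Super.P m n |
        ∃ u ∈ Super.Hk m n (k - 1), ∃ v ∈ Super.Hk m n (l - 1), p = u * v} := by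
  have hk' := Super.mem_Hk_iff.1 hHk
  have hl' := Super.mem_Hk_iff.1 hHl
  rw [Super.Delta_mul Hk Hl hk'.2 hl'.2]
  refine Submodule.sub_mem _ (Submodule.sub_mem _ (Submodule.neg_mem _ ?_) ?_) ?_
  · exact nsmul_mem (Submodule.sum_mem _ fun j _ =>
      Super.span_prod_mem _ _ (Super.dg_mem_Hk hk (Super.sg_mem_Hk hHk) _)
        (Super.dg_mem_Hk hl hHl _)) 4
  · exact nsmul_mem (Submodule.sum_mem _ fun j _ =>
      Super.span_prod_mem _ _ (Super.sg_mem_Hk (Super.dg_mem_Hk hk hHk _))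
        (Super.dg_mem_Hk hl hHl _)) 4
  · exact nsmul_mem (Submodule.sum_mem _ fun i _ =>
      Super.span_prod_mem _ _ (Super.dx_mem_Hk hk hHk _)
        (Super.dx_mem_Hk hl hHl _)) 2
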